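/- Let p ≥ 2 be an integer, ε ∈ (0, p), and n a positive integer such that (p−ε)n is a positive integer. Let A, B be disjoint sets with |A| = n and |B| = (p−ε)n, let X = A ∪ B, and let I = { S ⊆ X : |S ∩ A| + p·|S ∩ B| ≤ |A| or p·|S ∩ A| + |S ∩ B| ≤ |B| }. Set weights w(a) = 1 for a ∈ A and w(b) = p−ε for b ∈ B. Then A ∈ I and B ∈ I, w(B) = (p−ε)²·w(A), and for every Y ⊆ B and Z ⊆ A with |Z| < (ε/p)·n, if (A \ Z) ∪ Y ∈ I then w((A \ Z) ∪ Y) ≤ w(A). In particular, A is a local optimum unless the local search explores exchanges of size at least (ε/p)·n. -/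

import Mathlib

open Finset

/-- A downward-closed independence system on the finite type `α`. -/
def DownClosed {α : Type*} (I : Finset α → Prop) : Prop :=
  I ∅ ∧ ∀ A B : Finset α, I A → B ⊆ A → I B

/-- The lower-bound instance for local search on `p`-extendible systems:
`A` and `B` are independent, `w(B) = (p−ε)²·w(A)`, and any feasible exchange that adds
`Y ⊆ B` and removes `Z ⊆ A` with `|Z| < (ε/p)·n` does not improve on `A`. -/
theorem local_search_lower_bound_pExtendible
    {α : Type*} [Fintype α] [DecidableEq α] (p : ℕ) (hp : 2 ≤ p)
    (ε : ℝ) (hε0 : 0 < ε) (hεp : ε < (p : ℝ))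
    (n m : ℕ) (hn : 0 < n) (hm : 0 < m) (hmval : (m : ℝ) = ((p : ℝ) - ε) * n)
    (A B : Finset α) (hdisj : Disjoint A B)
    (hground : (Finset.univ : Finset α) = A ∪ B)
    (hcardA : A.card = n) (hcardB : B.card = m)
    (I : Finset α → Prop)
    (hI : ∀ S : Finset α, I S ↔
      ((S ∩ A).card + p * (S ∩ B).card ≤ A.card ∨
       p * (S ∩ A).card + (S ∩ B).card ≤ B.card))
    (w : α → ℝ) (hwA : ∀ a ∈ A, w a = 1) (hwB : ∀ b ∈ B, w b = (p : ℝ) - ε) :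
    I A ∧ I B ∧
    (∑ e ∈ B, w e) = ((p : ℝ) - ε) ^ 2 * (∑ e ∈ A, w e) ∧
    ∀ Y ⊆ B, ∀ Z ⊆ A, (Z.card : ℝ) < (ε / p) * n →
      I ((A \ Z) ∪ Y) → (∑ e ∈ (A \ Z) ∪ Y, w e) ≤ ∑ e ∈ A, w e := by
  have hAB : A ∩ B = ∅ := Finset.disjoint_iff_inter_eq_empty.mp hdisj
  have hBA : B ∩ A = ∅ := by rw [Finset.inter_comm]; exact hAB
  have hsumA : ∑ e ∈ A, w e = (n : ℝ) := by
    rw [Finset.sum_congr rfl hwA]; simp [hcardA]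
  have hp0 : (0 : ℝ) < p := by positivity
  refine ⟨?_, ?_, ?_, ?_⟩
  · rw [hI]; left; simp [Finset.inter_self, hAB]
  · rw [hI]; right; simp [Finset.inter_self, hBA]
  · have hsumB : ∑ e ∈ B, w e = (m : ℝ) * ((p : ℝ) - ε) := by
      rw [Finset.sum_congr rfl hwB]; simp [hcardB, mul_comm]; ring
    rw [hsumA, hsumB, hmval]; ring
  · intro Y hY Z hZ hZcard hind
    have hYA : Y ∩ A = ∅ :=
      Finset.disjoint_iff_inter_eq_empty.mp (hdisj.symm.mono_left hY)
    have hSA : ((A \ Z) ∪ Y) ∩ A = A \ Z := by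
      rw [Finset.union_inter_distrib_right, hYA,
        Finset.inter_eq_left.mpr (Finset.sdiff_subset), Finset.union_empty]
    have hSB : ((A \ Z) ∪ Y) ∩ B = Y := by
      rw [Finset.union_inter_distrib_right, Finset.inter_eq_left.mpr hY]
      have : (A \ Z) ∩ B = ∅ := Finset.disjoint_iff_inter_eq_empty.mp
        (hdisj.mono_left Finset.sdiff_subset)
      rw [this, Finset.empty_union]
    have hZn : Z.card ≤ n := hcardA ▸ Finset.card_le_card hZ
    have hcardS : (A \ Z).card = n - Z.card := by
      rw [Finset.card_sdiff_of_subset hZ, hcardA]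
    have hdisjS : Disjoint (A \ Z) Y := hdisj.mono Finset.sdiff_subset hY
    have hsumS : ∑ e ∈ (A \ Z) ∪ Y, w e
        = ((n : ℝ) - Z.card) + ((p : ℝ) - ε) * Y.card := by
      rw [Finset.sum_union hdisjS]
      have h1 : ∑ e ∈ A \ Z, w e = ((n : ℝ) - Z.card) := by
        rw [Finset.sum_congr rfl fun a ha => hwA a (Finset.mem_sdiff.mp ha).1]
        rw [Finset.sum_const, hcardS, nsmul_eq_mul, mul_one,
          Nat.cast_sub hZn]
      have h2 : ∑ e ∈ Y, w e = ((p : ℝ) - ε) * Y.card := by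
        rw [Finset.sum_congr rfl fun b hb => hwB b (hY hb)]
        rw [Finset.sum_const, nsmul_eq_mul, mul_comm]
      rw [h1, h2]
    rw [hI, hSA, hSB, hcardS, hcardA, hcardB] at hind
    have hpZ : (p : ℝ) * Z.card < ε * n := by
      rw [div_mul_eq_mul_div, lt_div_iff₀ hp0] at hZcard
      linarith [hZcard]
    rcases hind with h | h
    · -- n - |Z| + p|Y| ≤ n, so p|Y| ≤ |Z|
      have h' : (p : ℝ) * Y.card ≤ Z.card := by
        have := (Nat.cast_le (α := ℝ)).mpr h
        push_cast [Nat.cast_sub hZn] at this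
        linarith
      rw [hsumS, hsumA]
      nlinarith [Nat.cast_nonneg (α := ℝ) Y.card]
    · -- p(n - |Z|) + |Y| ≤ m : contradiction
      exfalso
      have := (Nat.cast_le (α := ℝ)).mpr h
      push_cast [Nat.cast_sub hZn] at this
      rw [hmval] at this
      nlinarith [Nat.cast_nonneg (α := ℝ) Y.card]
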